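/- (Strong Cycle Lemma) Let q ≥ 0, k ≥ 0, and let a be a (k, qk+1)-arrangement of length n = (q+1)k+1. For every i with 1 ≤ i ≤ qk+1 there is a unique position r with a_r = 0 such that |D(r)| = i, i.e. exactly i of the 0-intervals of the 0-linearization ending at r are q-good. Moreover the nesting property holds: if r and s are zero positions with |D(r)| < |D(s)|, then D(r) ⊆ D(s). -/

import Mathlib

/-- An interval (list of 0's and 1's) is `q`-good if its number of 0's (`false`)
strictly exceeds `q` times its number of 1's (`true`). -/
def QGood (q : ℕ) (I : List Bool) : Prop :=
  q * I.count true < I.count false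

/-- The interval `(r, s]` of a cyclic arrangement `a : ZMod n → Bool`: the list
`a (r+1), …, a s` read cyclically, where `(r, r]` denotes the entire cycle. -/
def interval {n : ℕ} (a : ZMod n → Bool) (r s : ZMod n) : List Bool :=
  (List.range (if s = r then n else (s - r).val)).map
    (fun j => a (r + ((j + 1 : ℕ) : ZMod n)))

/-- For a zero position `r`, `Dset q a r` is the set of zero positions `j` such
that the 0-interval `(r, j]` is `q`-good. -/
def Dset {n : ℕ} (q : ℕ) (a : ZMod n → Bool) (r : ZMod n) : Set (ZMod n) :=
  {j | a j = false ∧ QGood q (interval a r j)}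

namespace SCL

/-- Weight of an entry: `-q` for a one, `+1` for a zero. -/
def wt (q : ℕ) (b : Bool) : ℤ := if b then -(q : ℤ) else 1

lemma list_sum (q : ℕ) (L : List Bool) :
    (L.map (wt q)).sum = (L.count false : ℤ) - q * L.count true := by
  induction L with
  | nil => simp
  | cons b t ih =>
    cases b <;> simp [wt, List.count_cons, ih] <;> push_cast <;> ring

lemma list_range_sum {M : Type*} [AddCommMonoid M] (f : ℕ → M) (m : ℕ) :
    ((List.range m).map f).sum = ∑ i ∈ Finset.range m, f i := by
  induction m with
  | zero => simp
  | succ m ih => rw [List.range_succ, Finset.sum_range_succ]; simp [ih]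

variable {n : ℕ}

/-- Partial weight sums along the line. -/
def pf (q : ℕ) (a : ZMod n → Bool) (m : ℕ) : ℤ :=
  ∑ i ∈ Finset.range m, wt q (a ((i + 1 : ℕ) : ZMod n))

lemma interval_sum (q : ℕ) [NeZero n] (a : ZMod n → Bool) (r s : ZMod n) :
    ((interval a r s).map (wt q)).sum
      = pf q a (r.val + (if s = r then n else (s - r).val)) - pf q a r.val := by
  unfold interval pf
  rw [Finset.sum_range_add]
  simp only [add_sub_cancel_left]
  rw [List.map_map, list_range_sum]
  apply Finset.sum_congr rfl
  intro i _
  simp only [Function.comp]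
  congr 1
  push_cast
  rw [ZMod.natCast_val, ZMod.cast_id]
  ring_nf

lemma sum_shift [NeZero n] (g : ZMod n → ℤ) (m : ℕ) :
    ∑ i ∈ Finset.range n, g ((m + i : ℕ) : ZMod n) = ∑ x : ZMod n, g x := by
  apply Finset.sum_nbij' (i := fun i => ((m + i : ℕ) : ZMod n))
    (j := fun x => ((x - (m : ZMod n)).val))
  · intro i _; exact Finset.mem_univ _
  · intro x _; exact Finset.mem_range.2 (ZMod.val_lt _)
  · intro i hi
    push_cast
    simp only [add_sub_cancel_left]
    exact ZMod.val_cast_of_lt (Finset.mem_range.1 hi)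
  · intro x _
    push_cast
    rw [ZMod.natCast_val, ZMod.cast_id]
    ring
  · intro i _; rfl

lemma pf_period (q : ℕ) [NeZero n] (a : ZMod n → Bool)
    (htot : ∑ x : ZMod n, wt q (a x) = 1) (m : ℕ) :
    pf q a (m + n) = pf q a m + 1 := by
  unfold pf
  rw [Finset.sum_range_add, ← htot, ← sum_shift (fun x => wt q (a x)) (m + 1)]
  congr 1
  apply Finset.sum_congr rfl
  intro i _
  rw [show m + i + 1 = m + 1 + i from by omega]

/-- The key injective invariant. -/
def vv (q : ℕ) (a : ZMod n → Bool) (j : ZMod n) : ℤ :=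
  n * pf q a j.val - j.val

lemma vv_inj (q : ℕ) [NeZero n] (a : ZMod n → Bool) :
    Function.Injective (vv q a) := by
  intro x y h
  unfold vv at h
  have hx := ZMod.val_lt x
  have hy := ZMod.val_lt y
  have hd : (n : ℤ) * (pf q a x.val - pf q a y.val) = (x.val : ℤ) - y.val := by linarith [h]
  have hn : (0:ℤ) < n := by exact_mod_cast Nat.pos_of_ne_zero (NeZero.ne n)
  have hb1 : (x.val : ℤ) - y.val < n := by
    have : (x.val : ℤ) < n := by exact_mod_cast hx
    have : (0:ℤ) ≤ y.val := by positivity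
    omega
  have hb2 : -(n : ℤ) < (x.val : ℤ) - y.val := by
    have : (y.val : ℤ) < n := by exact_mod_cast hy
    have : (0:ℤ) ≤ x.val := by positivity
    omega
  have hpf : pf q a x.val = pf q a y.val := by nlinarith [hd]
  have hvv : (x.val : ℤ) = y.val := by rw [hpf] at hd; linarith
  have : x.val = y.val := by exact_mod_cast hvv
  exact ZMod.val_injective n this

/-- Splitting of `r.val + (s-r).val`. -/
lemma val_add_sub [NeZero n] {r s : ZMod n} (hne : s ≠ r) :
    (r.val < s.val ∧ r.val + (s - r).val = s.val) ∨
    (s.val < r.val ∧ r.val + (s - r).val = s.val + n) := by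
  have h1 : ((r.val + (s - r).val : ℕ) : ZMod n) = ((s.val : ℕ) : ZMod n) := by
    push_cast
    rw [ZMod.natCast_val, ZMod.natCast_val, ZMod.natCast_val, ZMod.cast_id, ZMod.cast_id,
      ZMod.cast_id]
    ring
  have h2 : (r.val + (s - r).val) % n = s.val % n := by
    rwa [ZMod.natCast_eq_natCast_iff, Nat.ModEq] at h1
  have hrv := ZMod.val_lt r
  have hsv := ZMod.val_lt s
  have hsr : 0 < (s - r).val := ZMod.val_pos.2 (sub_ne_zero.2 hne)
  have hsrlt := ZMod.val_lt (s - r)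
  have hvne : r.val ≠ s.val := fun h => hne (ZMod.val_injective n h.symm)
  rw [Nat.mod_eq_of_lt hsv] at h2
  have hsum : r.val + (s - r).val = s.val ∨ r.val + (s - r).val = s.val + n := by
    rcases Nat.lt_or_ge (r.val + (s - r).val) n with h' | h'
    · left; rwa [Nat.mod_eq_of_lt h'] at h2
    · right
      have h3 : r.val + (s - r).val - n < n := by omega
      rw [Nat.mod_eq_sub_mod h', Nat.mod_eq_of_lt h3] at h2
      omega
  rcases hsum with h4 | h4
  · left; constructor <;> omega
  · right; constructor <;> omega

/-- The weight sum of the interval `(r, s]`. -/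
def Sval (q : ℕ) {n : ℕ} (a : ZMod n → Bool) (r s : ZMod n) : ℤ :=
  ((interval a r s).count false : ℤ) - q * (interval a r s).count true

lemma qgood_iff_sval (q : ℕ) {n : ℕ} (a : ZMod n → Bool) (r s : ZMod n) :
    QGood q (interval a r s) ↔ 0 < Sval q a r s := by
  unfold QGood Sval
  constructor <;> intro h
  · have : ((q * (interval a r s).count true : ℕ) : ℤ) < ((interval a r s).count false : ℤ) := by
      exact_mod_cast h
    push_cast at this
    linarith
  · have : ((q : ℤ) * (interval a r s).count true) < (interval a r s).count false := by linarith
    exact_mod_cast this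

lemma sval_eq (q : ℕ) [NeZero n] (a : ZMod n → Bool) (r s : ZMod n) :
    Sval q a r s = pf q a (r.val + (if s = r then n else (s - r).val)) - pf q a r.val := by
  rw [← interval_sum, list_sum]
  rfl

lemma sval_self (q : ℕ) [NeZero n] (a : ZMod n → Bool)
    (htot : ∑ x : ZMod n, wt q (a x) = 1) (r : ZMod n) :
    Sval q a r r = 1 := by
  rw [sval_eq, if_pos rfl, pf_period q a htot]
  ring

lemma sval_pos_iff (q : ℕ) [NeZero n] (a : ZMod n → Bool)
    (htot : ∑ x : ZMod n, wt q (a x) = 1) {r s : ZMod n} (hne : s ≠ r) :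
    0 < Sval q a r s ↔ vv q a r < vv q a s := by
  have hn : (0:ℤ) < n := by exact_mod_cast Nat.pos_of_ne_zero (NeZero.ne n)
  have hrn : (r.val : ℤ) < n := by exact_mod_cast ZMod.val_lt r
  have hsn : (s.val : ℤ) < n := by exact_mod_cast ZMod.val_lt s
  rw [sval_eq, if_neg hne]
  rcases val_add_sub hne with ⟨hlt, heq⟩ | ⟨hlt, heq⟩
  · rw [heq]
    unfold vv
    have hvlt : (r.val : ℤ) < s.val := by exact_mod_cast hlt
    constructor
    · intro h
      have h1 : pf q a r.val + 1 ≤ pf q a s.val := by linarith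
      nlinarith
    · intro h
      nlinarith
  · rw [heq, pf_period q a htot]
    unfold vv
    have hvlt : (s.val : ℤ) < r.val := by exact_mod_cast hlt
    constructor
    · intro h
      have h1 : pf q a r.val ≤ pf q a s.val := by linarith
      nlinarith
    · intro h
      have h1 : pf q a r.val ≤ pf q a s.val := by nlinarith
      linarith

/-- Characterization of `Dset` in terms of `vv`. -/
lemma dset_eq (q : ℕ) [NeZero n] (a : ZMod n → Bool)
    (htot : ∑ x : ZMod n, wt q (a x) = 1) {r : ZMod n} (hr : a r = false) :
    Dset q a r = {j | a j = false ∧ (j = r ∨ vv q a r < vv q a j)} := by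
  ext j
  simp only [Dset, Set.mem_setOf_eq]
  constructor
  · rintro ⟨hj, hg⟩
    refine ⟨hj, ?_⟩
    by_cases hne : j = r
    · exact Or.inl hne
    · exact Or.inr ((sval_pos_iff q a htot hne).1 ((qgood_iff_sval q a r j).1 hg))
  · rintro ⟨hj, hg | hg⟩
    · subst hg
      refine ⟨hj, (qgood_iff_sval q a j j).2 ?_⟩
      rw [sval_self q a htot]; norm_num
    · have hne : j ≠ r := fun h => by subst h; exact lt_irrefl _ hg
      exact ⟨hj, (qgood_iff_sval q a r j).2 ((sval_pos_iff q a htot hne).2 hg)⟩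

end SCL

open SCL in
theorem strong_cycle_lemma (q k : ℕ) (a : ZMod ((q + 1) * k + 1) → Bool)
    (hones : Nat.card {i : ZMod ((q + 1) * k + 1) | a i = true} = k) :
    (∀ i : ℕ, 1 ≤ i → i ≤ q * k + 1 →
        ∃! r : ZMod ((q + 1) * k + 1), a r = false ∧ (Dset q a r).ncard = i) ∧
      (∀ r s : ZMod ((q + 1) * k + 1), a r = false → a s = false →
        (Dset q a r).ncard < (Dset q a s).ncard → Dset q a r ⊆ Dset q a s) := by
  set T : Finset (ZMod ((q + 1) * k + 1)) := Finset.univ.filter (fun x => a x = true) with hT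
  set Z : Finset (ZMod ((q + 1) * k + 1)) := Finset.univ.filter (fun x => a x = false) with hZ
  have hTcard : T.card = k := by
    have h1 : Nat.card {i : ZMod ((q + 1) * k + 1) | a i = true} = T.card := by
      rw [Nat.card_coe_set_eq, Set.ncard_eq_toFinset_card']
      congr 1
      simp [hT, Set.toFinset_setOf]
    rw [← h1]; exact hones
  have hdisj : Disjoint T Z := by
    rw [hT, hZ, Finset.disjoint_filter]
    intro x _ h1 h2
    rw [h1] at h2; exact Bool.noConfusion h2
  have hun : T ∪ Z = Finset.univ := by
    rw [hT, hZ]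
    ext x
    simp only [Finset.mem_union, Finset.mem_filter, Finset.mem_univ, true_and]
    cases h : a x <;> simp
  have hcards : T.card + Z.card = (q + 1) * k + 1 := by
    rw [← Finset.card_union_of_disjoint hdisj, hun, Finset.card_univ, ZMod.card]
  have hZcard : Z.card = q * k + 1 := by
    have hr : (q + 1) * k + 1 = q * k + k + 1 := by ring
    omega
  -- total weight is 1
  have htot : ∑ x : ZMod ((q + 1) * k + 1), wt q (a x) = 1 := by
    rw [← Finset.sum_filter_add_sum_filter_not Finset.univ (fun x => a x = true)]
    have e1 : ∀ x ∈ Finset.univ.filter (fun x => a x = true), wt q (a x) = -(q:ℤ) := by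
      intro x hx
      simp only [Finset.mem_filter] at hx
      simp [wt, hx.2]
    have e2 : ∀ x ∈ Finset.univ.filter (fun x : ZMod ((q + 1) * k + 1) => ¬(a x = true)),
        wt q (a x) = 1 := by
      intro x hx
      simp only [Finset.mem_filter, Bool.not_eq_true] at hx
      simp [wt, hx.2]
    rw [Finset.sum_congr rfl e1, Finset.sum_congr rfl e2]
    have hfe : Finset.univ.filter (fun x : ZMod ((q + 1) * k + 1) => ¬(a x = true)) = Z := by
      rw [hZ]; congr 1; ext x; simp
    rw [hfe]
    simp only [Finset.sum_const, nsmul_eq_mul, mul_one]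
    rw [show (Finset.univ.filter (fun x : ZMod ((q + 1) * k + 1) => a x = true)) = T from hT.symm,
      hTcard, hZcard]
    push_cast
    ring
  -- the counting function
  set c : ZMod ((q + 1) * k + 1) → ℕ :=
    fun r => (Z.filter (fun j => vv q a r < vv q a j)).card with hc
  have hvinj := vv_inj q a
  have hanti : ∀ r ∈ Z, ∀ s ∈ Z, vv q a r < vv q a s → c s < c r := by
    intro r hr s hs hlt
    apply Finset.card_lt_card
    rw [Finset.ssubset_iff_of_subset]
    · exact ⟨s, Finset.mem_filter.2 ⟨hs, hlt⟩, by simp⟩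
    · intro j hj
      simp only [Finset.mem_filter] at hj ⊢
      exact ⟨hj.1, lt_trans hlt hj.2⟩
  have hcinj : Set.InjOn c Z := by
    intro r hr s hs h
    by_contra hne
    have hvne : vv q a r ≠ vv q a s := fun hv => hne (hvinj hv)
    rcases lt_or_gt_of_ne hvne with hlt | hlt
    · have := hanti r hr s hs hlt; omega
    · have := hanti s hs r hr hlt; omega
  have hclt : ∀ r ∈ Z, c r < Z.card := by
    intro r hr
    apply Finset.card_lt_card
    rw [Finset.ssubset_iff_of_subset (Finset.filter_subset _ _)]
    exact ⟨r, hr, by simp⟩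
  have hsurj : ∀ i < Z.card, ∃ r ∈ Z, c r = i := by
    intro i hi
    have himg : Z.image c = Finset.range Z.card := by
      apply Finset.eq_of_subset_of_card_le
      · intro x hx
        rw [Finset.mem_image] at hx
        obtain ⟨r, hr, rfl⟩ := hx
        exact Finset.mem_range.2 (hclt r hr)
      · rw [Finset.card_range, Finset.card_image_of_injOn hcinj]
    have hmem : i ∈ Z.image c := by rw [himg]; exact Finset.mem_range.2 hi
    rw [Finset.mem_image] at hmem
    exact hmem
  have hDcard : ∀ r, a r = false → (Dset q a r).ncard = c r + 1 := by
    intro r hr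
    have heq : Dset q a r = ↑(insert r (Z.filter (fun j => vv q a r < vv q a j))) := by
      rw [dset_eq q a htot hr]
      ext j
      simp only [Set.mem_setOf_eq, Finset.coe_insert, Set.mem_insert_iff, Finset.mem_coe,
        Finset.mem_filter, hZ, Finset.mem_univ, true_and]
      constructor
      · rintro ⟨hj, h | h⟩
        · exact Or.inl h
        · exact Or.inr ⟨hj, h⟩
      · rintro (h | ⟨hj, h⟩)
        · subst h; exact ⟨hr, Or.inl rfl⟩
        · exact ⟨hj, Or.inr h⟩
    rw [heq, Set.ncard_coe_finset, Finset.card_insert_of_notMem]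
    simp
  constructor
  · intro i h1 hi
    have hi' : i - 1 < Z.card := by omega
    obtain ⟨r, hrZ, hcr⟩ := hsurj (i - 1) hi'
    have hra : a r = false := (Finset.mem_filter.1 hrZ).2
    refine ⟨r, ⟨hra, by rw [hDcard r hra, hcr]; omega⟩, ?_⟩
    rintro s ⟨hsa, hscard⟩
    have hsZ : s ∈ Z := Finset.mem_filter.2 ⟨Finset.mem_univ _, hsa⟩
    apply hcinj hsZ hrZ
    rw [hDcard s hsa] at hscard
    omega
  · intro r s hra hsa hlt
    have hrZ : r ∈ Z := Finset.mem_filter.2 ⟨Finset.mem_univ _, hra⟩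
    have hsZ : s ∈ Z := Finset.mem_filter.2 ⟨Finset.mem_univ _, hsa⟩
    rw [hDcard r hra, hDcard s hsa] at hlt
    have hclt' : c r < c s := by omega
    have hv : vv q a s < vv q a r := by
      rcases lt_trichotomy (vv q a s) (vv q a r) with h | h | h
      · exact h
      · cases hvinj h; omega
      · have := hanti r hrZ s hsZ h; omega
    rw [dset_eq q a htot hra, dset_eq q a htot hsa]
    rintro j ⟨hj, h | h⟩
    · subst h
      exact ⟨hj, Or.inr hv⟩
    · exact ⟨hj, Or.inr (lt_trans hv h)⟩
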